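/- arXiv:1903.01117 — 3 statements merged into one kernel-verified Lean document; each statement's English description precedes it below -/
import Mathlib

section
/- Suppose the vectors (u_Ω, p_Ω, u_μ, p_μ, u_γ, p_γ, u_Γ) solve the full block system: A_Ω u_Ω + B_Ω p_Ω + G_Ω p_μ = g_Ω, B_Ωᵀ u_Ω = f_Ω, A_μ u_μ + B_μ p_μ = g_μ, G_Ωᵀ u_Ω + B_μᵀ u_μ + G_μ u_Γ = f_μ, A_γ u_γ + B_γ p_γ = g_γ, B_γᵀ u_γ + G_γ u_Γ = f_γ, G_μᵀ p_μ + G_γᵀ p_γ + A_Γ u_Γ = 0. Then the pressures (p_Ω, p_μ, p_γ) solve the reduced pressure system: S_Ω p_Ω + C_Ω p_μ = r_Ω, C_Ωᵀ p_Ω + S_μ p_μ + C_μ p_γ = r_μ, C_μᵀ p_μ + S_γ p_γ = r_γ, where S_Ω := B_Ωᵀ A_Ω⁻¹ B_Ω, S_μ := B_μᵀ A_μ⁻¹ B_μ + G_Ωᵀ A_Ω⁻¹ G_Ω + G_μ A_Γ⁻¹ G_μᵀ, S_γ := B_γᵀ A_γ⁻¹ B_γ + G_γ A_Γ⁻¹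 G_γᵀ, C_Ω := B_Ωᵀ A_Ω⁻¹ G_Ω, C_μ := G_μ A_Γ⁻¹ G_γᵀ, r_Ω := −f_Ω + B_Ωᵀ A_Ω⁻¹ g_Ω, r_μ := −f_μ + B_μᵀ A_μ⁻¹ g_μ + G_Ωᵀ A_Ω⁻¹ g_Ω, r_γ := −f_γ + B_γᵀ A_γ⁻¹ g_γ. -/
open Matrix

/-- If `(u_Ω, p_Ω, u_μ, p_μ, u_γ, p_γ, u_Γ)` solves the full block system of
the discretized mixed-dimensional Darcy problem, then the pressures
`(p_Ω, p_μ, p_γ)` solve the reduced (Schur complement) pressure system. -/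
theorem darcy_full_to_pressure_system {nΩ mΩ nμ mμ nγ mγ nΓ : ℕ}
    (AΩ : Matrix (Fin nΩ) (Fin nΩ) ℝ)
    (Aμ : Matrix (Fin nμ) (Fin nμ) ℝ)
    (Aγ : Matrix (Fin nγ) (Fin nγ) ℝ)
    (AΓ : Matrix (Fin nΓ) (Fin nΓ) ℝ)
    (BΩ : Matrix (Fin nΩ) (Fin mΩ) ℝ)
    (Bμ : Matrix (Fin nμ) (Fin mμ) ℝ)
    (Bγ : Matrix (Fin nγ) (Fin mγ) ℝ)
    (GΩ : Matrix (Fin nΩ) (Fin mμ) ℝ)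
    (Gμ : Matrix (Fin mμ) (Fin nΓ) ℝ)
    (Gγ : Matrix (Fin mγ) (Fin nΓ) ℝ)
    (hAΩ : AΩ.PosDef) (hAμ : Aμ.PosDef) (hAγ : Aγ.PosDef) (hAΓ : AΓ.PosDef)
    (uΩ : Fin nΩ → ℝ) (pΩ : Fin mΩ → ℝ)
    (uμ : Fin nμ → ℝ) (pμ : Fin mμ → ℝ)
    (uγ : Fin nγ → ℝ) (pγ : Fin mγ → ℝ)
    (uΓ : Fin nΓ → ℝ)
    (gΩ : Fin nΩ → ℝ) (fΩ : Fin mΩ → ℝ)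
    (gμ : Fin nμ → ℝ) (fμ : Fin mμ → ℝ)
    (gγ : Fin nγ → ℝ) (fγ : Fin mγ → ℝ)
    -- the full block system
    (h1 : AΩ.mulVec uΩ + BΩ.mulVec pΩ + GΩ.mulVec pμ = gΩ)
    (h2 : BΩᵀ.mulVec uΩ = fΩ)
    (h3 : Aμ.mulVec uμ + Bμ.mulVec pμ = gμ)
    (h4 : GΩᵀ.mulVec uΩ + Bμᵀ.mulVec uμ + Gμ.mulVec uΓ = fμ)
    (h5 : Aγ.mulVec uγ + Bγ.mulVec pγ = gγ)
    (h6 : Bγᵀ.mulVec uγ + Gγ.mulVec uΓ = fγ)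
    (h7 : Gμᵀ.mulVec pμ + Gγᵀ.mulVec pγ + AΓ.mulVec uΓ = 0) :
    -- the reduced pressure system
    (BΩᵀ * AΩ⁻¹ * BΩ).mulVec pΩ + (BΩᵀ * AΩ⁻¹ * GΩ).mulVec pμ
        = -fΩ + (BΩᵀ * AΩ⁻¹).mulVec gΩ ∧
    (BΩᵀ * AΩ⁻¹ * GΩ)ᵀ.mulVec pΩ
        + (Bμᵀ * Aμ⁻¹ * Bμ + GΩᵀ * AΩ⁻¹ * GΩ + Gμ * AΓ⁻¹ * Gμᵀ).mulVec pμ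
        + (Gμ * AΓ⁻¹ * Gγᵀ).mulVec pγ
        = -fμ + (Bμᵀ * Aμ⁻¹).mulVec gμ + (GΩᵀ * AΩ⁻¹).mulVec gΩ ∧
    (Gμ * AΓ⁻¹ * Gγᵀ)ᵀ.mulVec pμ
        + (Bγᵀ * Aγ⁻¹ * Bγ + Gγ * AΓ⁻¹ * Gγᵀ).mulVec pγ
        = -fγ + (Bγᵀ * Aγ⁻¹).mulVec gγ := by
  have dΩ : IsUnit AΩ.det := isUnit_iff_ne_zero.mpr hAΩ.det_pos.ne'
  have dμ : IsUnit Aμ.det := isUnit_iff_ne_zero.mpr hAμ.det_pos.ne'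
  have dγ : IsUnit Aγ.det := isUnit_iff_ne_zero.mpr hAγ.det_pos.ne'
  have dΓ : IsUnit AΓ.det := isUnit_iff_ne_zero.mpr hAΓ.det_pos.ne'
  have tΩ : AΩ⁻¹ᵀ = AΩ⁻¹ := by
    rw [Matrix.transpose_nonsing_inv]
    congr 1
    simpa [Matrix.IsSymm] using hAΩ.1
  have tΓ : AΓ⁻¹ᵀ = AΓ⁻¹ := by
    rw [Matrix.transpose_nonsing_inv]
    congr 1
    simpa [Matrix.IsSymm] using hAΓ.1
  have euΩ : uΩ = AΩ⁻¹.mulVec (gΩ - BΩ.mulVec pΩ - GΩ.mulVec pμ) := by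
    have h1' : AΩ.mulVec uΩ = gΩ - BΩ.mulVec pΩ - GΩ.mulVec pμ := by
      rw [← h1]; abel
    calc uΩ = (AΩ⁻¹ * AΩ).mulVec uΩ := by
            rw [Matrix.nonsing_inv_mul AΩ dΩ, Matrix.one_mulVec]
      _ = AΩ⁻¹.mulVec (AΩ.mulVec uΩ) := by rw [← Matrix.mulVec_mulVec]
      _ = _ := by rw [h1']
  have euμ : uμ = Aμ⁻¹.mulVec (gμ - Bμ.mulVec pμ) := by
    have h3' : Aμ.mulVec uμ = gμ - Bμ.mulVec pμ := by rw [← h3]; abel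
    calc uμ = (Aμ⁻¹ * Aμ).mulVec uμ := by
            rw [Matrix.nonsing_inv_mul Aμ dμ, Matrix.one_mulVec]
      _ = Aμ⁻¹.mulVec (Aμ.mulVec uμ) := by rw [← Matrix.mulVec_mulVec]
      _ = _ := by rw [h3']
  have euγ : uγ = Aγ⁻¹.mulVec (gγ - Bγ.mulVec pγ) := by
    have h5' : Aγ.mulVec uγ = gγ - Bγ.mulVec pγ := by rw [← h5]; abel
    calc uγ = (Aγ⁻¹ * Aγ).mulVec uγ := by
            rw [Matrix.nonsing_inv_mul Aγ dγ, Matrix.one_mulVec]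
      _ = Aγ⁻¹.mulVec (Aγ.mulVec uγ) := by rw [← Matrix.mulVec_mulVec]
      _ = _ := by rw [h5']
  have euΓ : uΓ = AΓ⁻¹.mulVec (-(Gμᵀ.mulVec pμ) - Gγᵀ.mulVec pγ) := by
    have h7' : AΓ.mulVec uΓ = -(Gμᵀ.mulVec pμ) - Gγᵀ.mulVec pγ := by
      have := h7
      rw [← sub_eq_zero] at this ⊢
      rw [← this]; abel
    calc uΓ = (AΓ⁻¹ * AΓ).mulVec uΓ := by
            rw [Matrix.nonsing_inv_mul AΓ dΓ, Matrix.one_mulVec]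
      _ = AΓ⁻¹.mulVec (AΓ.mulVec uΓ) := by rw [← Matrix.mulVec_mulVec]
      _ = _ := by rw [h7']
  subst euΩ euμ euγ euΓ
  refine ⟨?_, ?_, ?_⟩
  · rw [← h2]
    simp [Matrix.mulVec_add, Matrix.mulVec_sub, Matrix.mulVec_neg,
      ← Matrix.mulVec_mulVec, Matrix.mul_assoc]
    abel
  · rw [← h4]
    simp [Matrix.mulVec_add, Matrix.mulVec_sub, Matrix.mulVec_neg,
      Matrix.add_mulVec, Matrix.transpose_mul, Matrix.transpose_transpose, tΩ, tΓ,
      ← Matrix.mulVec_mulVec, Matrix.mul_assoc]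
    abel
  · rw [← h6]
    simp [Matrix.mulVec_add, Matrix.mulVec_sub, Matrix.mulVec_neg,
      Matrix.add_mulVec, Matrix.transpose_mul, Matrix.transpose_transpose, tΩ, tΓ,
      ← Matrix.mulVec_mulVec, Matrix.mul_assoc]
    abel
end

section
/- Suppose the pressures (p_Ω, p_μ, p_γ) solve the reduced pressure system S_Ω p_Ω + C_Ω p_μ = r_Ω, C_Ωᵀ p_Ω + S_μ p_μ + C_μ p_γ = r_μ, C_μᵀ p_μ + S_γ p_γ = r_γ, and define the velocities by u_Ω := A_Ω⁻¹ (g_Ω − B_Ω p_Ω − G_Ω p_μ), u_μ := A_μ⁻¹ (g_μ − B_μ p_μ), u_γ := A_γ⁻¹ (g_γ − B_γ p_γ), u_Γ := −A_Γ⁻¹ (G_μᵀ p_μ + G_γᵀ p_γ). Then (u_Ω, p_Ω, u_μ, p_μ, u_γ, p_γ, u_Γ) solves the full block system: A_Ω u_Ω + B_Ω p_Ω + G_Ω p_μ = g_Ω, B_Ωᵀ u_Ω = f_Ω, A_μ u_μ + B_μ p_μ = g_μ, G_Ωᵀ u_Ω + B_μᵀ u_μ + G_μ u_Γ = f_μ,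 A_γ u_γ + B_γ p_γ = g_γ, B_γᵀ u_γ + G_γ u_Γ = f_γ, G_μᵀ p_μ + G_γᵀ p_γ + A_Γ u_Γ = 0. Here S_Ω := B_Ωᵀ A_Ω⁻¹ B_Ω, S_μ := B_μᵀ A_μ⁻¹ B_μ + G_Ωᵀ A_Ω⁻¹ G_Ω + G_μ A_Γ⁻¹ G_μᵀ, S_γ := B_γᵀ A_γ⁻¹ B_γ + G_γ A_Γ⁻¹ G_γᵀ, C_Ω := B_Ωᵀ A_Ω⁻¹ G_Ω, C_μ := G_μ A_Γ⁻¹ G_γᵀ, r_Ω := −f_Ω + B_Ωᵀ A_Ω⁻¹ g_Ω, r_μ := −f_μ + B_μᵀ A_μ⁻¹ g_μ + G_Ωᵀ A_Ω⁻¹ g_Ω, r_γ := −f_γ + B_γᵀ A_γ⁻¹ g_γ. -/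
open Matrix

/-- Conversely: if the pressures `(p_Ω, p_μ, p_γ)` solve the reduced
(Schur complement) pressure system and the velocities are reconstructed by
`u_Ω = A_Ω⁻¹ (g_Ω − B_Ω p_Ω − G_Ω p_μ)`, `u_μ = A_μ⁻¹ (g_μ − B_μ p_μ)`,
`u_γ = A_γ⁻¹ (g_γ − B_γ p_γ)`, `u_Γ = −A_Γ⁻¹ (G_μᵀ p_μ + G_γᵀ p_γ)`, then the
full block system of the discretized mixed-dimensional Darcy problem holds. -/
theorem darcy_pressure_to_full_system {nΩ mΩ nμ mμ nγ mγ nΓ : ℕ}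
    (AΩ : Matrix (Fin nΩ) (Fin nΩ) ℝ)
    (Aμ : Matrix (Fin nμ) (Fin nμ) ℝ)
    (Aγ : Matrix (Fin nγ) (Fin nγ) ℝ)
    (AΓ : Matrix (Fin nΓ) (Fin nΓ) ℝ)
    (BΩ : Matrix (Fin nΩ) (Fin mΩ) ℝ)
    (Bμ : Matrix (Fin nμ) (Fin mμ) ℝ)
    (Bγ : Matrix (Fin nγ) (Fin mγ) ℝ)
    (GΩ : Matrix (Fin nΩ) (Fin mμ) ℝ)
    (Gμ : Matrix (Fin mμ) (Fin nΓ) ℝ)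
    (Gγ : Matrix (Fin mγ) (Fin nΓ) ℝ)
    (hAΩ : AΩ.PosDef) (hAμ : Aμ.PosDef) (hAγ : Aγ.PosDef) (hAΓ : AΓ.PosDef)
    (pΩ : Fin mΩ → ℝ) (pμ : Fin mμ → ℝ) (pγ : Fin mγ → ℝ)
    (gΩ : Fin nΩ → ℝ) (fΩ : Fin mΩ → ℝ)
    (gμ : Fin nμ → ℝ) (fμ : Fin mμ → ℝ)
    (gγ : Fin nγ → ℝ) (fγ : Fin mγ → ℝ)
    (uΩ : Fin nΩ → ℝ) (uμ : Fin nμ → ℝ) (uγ : Fin nγ → ℝ) (uΓ : Fin nΓ → ℝ)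
    -- reconstructed velocities
    (huΩ : uΩ = AΩ⁻¹.mulVec (gΩ - BΩ.mulVec pΩ - GΩ.mulVec pμ))
    (huμ : uμ = Aμ⁻¹.mulVec (gμ - Bμ.mulVec pμ))
    (huγ : uγ = Aγ⁻¹.mulVec (gγ - Bγ.mulVec pγ))
    (huΓ : uΓ = -AΓ⁻¹.mulVec (Gμᵀ.mulVec pμ + Gγᵀ.mulVec pγ))
    -- the reduced pressure system
    (hp1 : (BΩᵀ * AΩ⁻¹ * BΩ).mulVec pΩ + (BΩᵀ * AΩ⁻¹ * GΩ).mulVec pμ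
        = -fΩ + (BΩᵀ * AΩ⁻¹).mulVec gΩ)
    (hp2 : (BΩᵀ * AΩ⁻¹ * GΩ)ᵀ.mulVec pΩ
        + (Bμᵀ * Aμ⁻¹ * Bμ + GΩᵀ * AΩ⁻¹ * GΩ + Gμ * AΓ⁻¹ * Gμᵀ).mulVec pμ
        + (Gμ * AΓ⁻¹ * Gγᵀ).mulVec pγ
        = -fμ + (Bμᵀ * Aμ⁻¹).mulVec gμ + (GΩᵀ * AΩ⁻¹).mulVec gΩ)
    (hp3 : (Gμ * AΓ⁻¹ * Gγᵀ)ᵀ.mulVec pμ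
        + (Bγᵀ * Aγ⁻¹ * Bγ + Gγ * AΓ⁻¹ * Gγᵀ).mulVec pγ
        = -fγ + (Bγᵀ * Aγ⁻¹).mulVec gγ) :
    -- the full block system
    AΩ.mulVec uΩ + BΩ.mulVec pΩ + GΩ.mulVec pμ = gΩ ∧
    BΩᵀ.mulVec uΩ = fΩ ∧
    Aμ.mulVec uμ + Bμ.mulVec pμ = gμ ∧
    GΩᵀ.mulVec uΩ + Bμᵀ.mulVec uμ + Gμ.mulVec uΓ = fμ ∧
    Aγ.mulVec uγ + Bγ.mulVec pγ = gγ ∧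
    Bγᵀ.mulVec uγ + Gγ.mulVec uΓ = fγ ∧
    Gμᵀ.mulVec pμ + Gγᵀ.mulVec pγ + AΓ.mulVec uΓ = 0 := by
  have dΩ : IsUnit AΩ.det := isUnit_iff_ne_zero.2 hAΩ.det_pos.ne'
  have dμ : IsUnit Aμ.det := isUnit_iff_ne_zero.2 hAμ.det_pos.ne'
  have dγ : IsUnit Aγ.det := isUnit_iff_ne_zero.2 hAγ.det_pos.ne'
  have dΓ : IsUnit AΓ.det := isUnit_iff_ne_zero.2 hAΓ.det_pos.ne'
  have eΩ : AΩ * AΩ⁻¹ = 1 := Matrix.mul_nonsing_inv _ dΩ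
  have eμ : Aμ * Aμ⁻¹ = 1 := Matrix.mul_nonsing_inv _ dμ
  have eγ : Aγ * Aγ⁻¹ = 1 := Matrix.mul_nonsing_inv _ dγ
  have eΓ : AΓ * AΓ⁻¹ = 1 := Matrix.mul_nonsing_inv _ dΓ
  have sΩ : AΩ⁻¹ᵀ = AΩ⁻¹ := by
    rw [Matrix.transpose_nonsing_inv]; congr 1; simpa using hAΩ.isHermitian.eq
  have sμ : Aμ⁻¹ᵀ = Aμ⁻¹ := by
    rw [Matrix.transpose_nonsing_inv]; congr 1; simpa using hAμ.isHermitian.eq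
  have sγ : Aγ⁻¹ᵀ = Aγ⁻¹ := by
    rw [Matrix.transpose_nonsing_inv]; congr 1; simpa using hAγ.isHermitian.eq
  have sΓ : AΓ⁻¹ᵀ = AΓ⁻¹ := by
    rw [Matrix.transpose_nonsing_inv]; congr 1; simpa using hAΓ.isHermitian.eq
  subst huΩ huμ huγ huΓ
  simp only [Matrix.mulVec_sub, Matrix.mulVec_add, Matrix.mulVec_neg,
    Matrix.add_mulVec, Matrix.sub_mulVec, Matrix.neg_mulVec,
    Matrix.mulVec_mulVec, Matrix.transpose_mul, Matrix.transpose_transpose,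
    sΩ, sμ, sγ, sΓ, eΩ, eμ, eγ, eΓ, Matrix.one_mulVec, Matrix.one_mul,
    ← Matrix.mul_assoc] at hp1 hp2 hp3 ⊢
  refine ⟨by abel, ?_, by abel, ?_, by abel, ?_, by abel⟩
  · linear_combination (norm := abel) -hp1
  · linear_combination (norm := abel) -hp2
  · linear_combination (norm := abel) -hp3
end

section
/- Let A_Ω, A_μ, A_γ, A_Γ be symmetric positive definite real matrices and B_Ω, B_μ, B_γ, G_Ω, G_μ, G_γ real matrices of compatible sizes, and define S_Ω := B_Ωᵀ A_Ω⁻¹ B_Ω, S_μ := B_μᵀ A_μ⁻¹ B_μ + G_Ωᵀ A_Ω⁻¹ G_Ω + G_μ A_Γ⁻¹ G_μᵀ, S_γ := B_γᵀ A_γ⁻¹ B_γ + G_γ A_Γ⁻¹ G_γᵀ, C_Ω := B_Ωᵀ A_Ω⁻¹ G_Ω, C_μ := G_μ A_Γ⁻¹ G_γᵀ. Then the block pressure-system matrix S := [[S_Ω, C_Ω, 0], [C_Ωᵀ, S_μ, C_μ], [0, C_μᵀ, S_γ]] is symmetric and positive semidefinite. Moreover, if the only triple (p_Ω, p_μ,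 p_γ) satisfying B_Ω p_Ω + G_Ω p_μ = 0, B_μ p_μ = 0, B_γ p_γ = 0 and G_μᵀ p_μ + G_γᵀ p_γ = 0 is the zero triple, then S is positive definite. -/
open Matrix

private lemma quad_aux {n a b : Type*} [Fintype n] [Fintype a] [Fintype b]
    (W : Matrix n n ℝ) (M : Matrix n a ℝ) (N : Matrix n b ℝ)
    (p : a → ℝ) (q : b → ℝ) :
    p ⬝ᵥ (Mᵀ * W * N) *ᵥ q = (M *ᵥ p) ⬝ᵥ W *ᵥ (N *ᵥ q) := by
  rw [← mulVec_mulVec, ← mulVec_mulVec, dotProduct_mulVec p, vecMul_transpose]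

private lemma pd_nonneg {n : Type*} [Fintype n] [DecidableEq n] {W : Matrix n n ℝ}
    (h : W.PosDef) (y : n → ℝ) : 0 ≤ y ⬝ᵥ W *ᵥ y := by
  simpa using h.posSemidef.dotProduct_mulVec_nonneg y

private lemma pd_eq_zero {n : Type*} [Fintype n] [DecidableEq n] {W : Matrix n n ℝ}
    (h : W.PosDef) {y : n → ℝ} (hy : y ⬝ᵥ W *ᵥ y = 0) : y = 0 := by
  by_contra hne
  have h2 := h.dotProduct_mulVec_pos hne
  simp only [star_trivial] at h2
  rw [hy] at h2
  exact lt_irrefl 0 h2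

private theorem darcy_main {nΩ mΩ nμ mμ nγ mγ nΓ : ℕ}
    (AΩ : Matrix (Fin nΩ) (Fin nΩ) ℝ)
    (Aμ : Matrix (Fin nμ) (Fin nμ) ℝ)
    (Aγ : Matrix (Fin nγ) (Fin nγ) ℝ)
    (AΓ : Matrix (Fin nΓ) (Fin nΓ) ℝ)
    (BΩ : Matrix (Fin nΩ) (Fin mΩ) ℝ)
    (Bμ : Matrix (Fin nμ) (Fin mμ) ℝ)
    (Bγ : Matrix (Fin nγ) (Fin mγ) ℝ)
    (GΩ : Matrix (Fin nΩ) (Fin mμ) ℝ)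
    (Gμ : Matrix (Fin mμ) (Fin nΓ) ℝ)
    (Gγ : Matrix (Fin mγ) (Fin nΓ) ℝ)
    (hAΩ : AΩ.PosDef) (hAμ : Aμ.PosDef) (hAγ : Aγ.PosDef) (hAΓ : AΓ.PosDef) :
    (Matrix.fromBlocks (BΩᵀ * AΩ⁻¹ * BΩ) (Matrix.fromCols (BΩᵀ * AΩ⁻¹ * GΩ) 0)
        (Matrix.fromRows (BΩᵀ * AΩ⁻¹ * GΩ)ᵀ (0 : Matrix (Fin mγ) (Fin mΩ) ℝ))
        (Matrix.fromBlocks (Bμᵀ * Aμ⁻¹ * Bμ + GΩᵀ * AΩ⁻¹ * GΩ + Gμ * AΓ⁻¹ * Gμᵀ)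
          (Gμ * AΓ⁻¹ * Gγᵀ) (Gμ * AΓ⁻¹ * Gγᵀ)ᵀ
          (Bγᵀ * Aγ⁻¹ * Bγ + Gγ * AΓ⁻¹ * Gγᵀ))).IsSymm ∧
    (Matrix.fromBlocks (BΩᵀ * AΩ⁻¹ * BΩ) (Matrix.fromCols (BΩᵀ * AΩ⁻¹ * GΩ) 0)
        (Matrix.fromRows (BΩᵀ * AΩ⁻¹ * GΩ)ᵀ (0 : Matrix (Fin mγ) (Fin mΩ) ℝ))
        (Matrix.fromBlocks (Bμᵀ * Aμ⁻¹ * Bμ + GΩᵀ * AΩ⁻¹ * GΩ + Gμ * AΓ⁻¹ * Gμᵀ)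
          (Gμ * AΓ⁻¹ * Gγᵀ) (Gμ * AΓ⁻¹ * Gγᵀ)ᵀ
          (Bγᵀ * Aγ⁻¹ * Bγ + Gγ * AΓ⁻¹ * Gγᵀ))).PosSemidef ∧
    ((∀ (pΩ : Fin mΩ → ℝ) (pμ : Fin mμ → ℝ) (pγ : Fin mγ → ℝ),
        BΩ.mulVec pΩ + GΩ.mulVec pμ = 0 → Bμ.mulVec pμ = 0 →
        Bγ.mulVec pγ = 0 → Gμᵀ.mulVec pμ + Gγᵀ.mulVec pγ = 0 →
        pΩ = 0 ∧ pμ = 0 ∧ pγ = 0) →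
      (Matrix.fromBlocks (BΩᵀ * AΩ⁻¹ * BΩ) (Matrix.fromCols (BΩᵀ * AΩ⁻¹ * GΩ) 0)
        (Matrix.fromRows (BΩᵀ * AΩ⁻¹ * GΩ)ᵀ (0 : Matrix (Fin mγ) (Fin mΩ) ℝ))
        (Matrix.fromBlocks (Bμᵀ * Aμ⁻¹ * Bμ + GΩᵀ * AΩ⁻¹ * GΩ + Gμ * AΓ⁻¹ * Gμᵀ)
          (Gμ * AΓ⁻¹ * Gγᵀ) (Gμ * AΓ⁻¹ * Gγᵀ)ᵀ
          (Bγᵀ * Aγ⁻¹ * Bγ + Gγ * AΓ⁻¹ * Gγᵀ))).PosDef) := by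
  have tΩ : (AΩ⁻¹)ᵀ = AΩ⁻¹ := by
    have h := hAΩ.inv.isHermitian
    rwa [Matrix.IsHermitian, conjTranspose_eq_transpose_of_trivial] at h
  have tμ : (Aμ⁻¹)ᵀ = Aμ⁻¹ := by
    have h := hAμ.inv.isHermitian
    rwa [Matrix.IsHermitian, conjTranspose_eq_transpose_of_trivial] at h
  have tγ : (Aγ⁻¹)ᵀ = Aγ⁻¹ := by
    have h := hAγ.inv.isHermitian
    rwa [Matrix.IsHermitian, conjTranspose_eq_transpose_of_trivial] at h
  have tΓ : (AΓ⁻¹)ᵀ = AΓ⁻¹ := by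
    have h := hAΓ.inv.isHermitian
    rwa [Matrix.IsHermitian, conjTranspose_eq_transpose_of_trivial] at h
  have hsym : (Matrix.fromBlocks (BΩᵀ * AΩ⁻¹ * BΩ) (Matrix.fromCols (BΩᵀ * AΩ⁻¹ * GΩ) 0)
        (Matrix.fromRows (BΩᵀ * AΩ⁻¹ * GΩ)ᵀ (0 : Matrix (Fin mγ) (Fin mΩ) ℝ))
        (Matrix.fromBlocks (Bμᵀ * Aμ⁻¹ * Bμ + GΩᵀ * AΩ⁻¹ * GΩ + Gμ * AΓ⁻¹ * Gμᵀ)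
          (Gμ * AΓ⁻¹ * Gγᵀ) (Gμ * AΓ⁻¹ * Gγᵀ)ᵀ
          (Bγᵀ * Aγ⁻¹ * Bγ + Gγ * AΓ⁻¹ * Gγᵀ))).IsSymm := by
    show _ᵀ = _
    simp [Matrix.fromBlocks_transpose, Matrix.transpose_fromCols, Matrix.transpose_fromRows,
      Matrix.transpose_add, Matrix.transpose_mul, Matrix.transpose_transpose,
      tΩ, tμ, tγ, tΓ, Matrix.mul_assoc]
  have hherm : (Matrix.fromBlocks (BΩᵀ * AΩ⁻¹ * BΩ) (Matrix.fromCols (BΩᵀ * AΩ⁻¹ * GΩ) 0)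
        (Matrix.fromRows (BΩᵀ * AΩ⁻¹ * GΩ)ᵀ (0 : Matrix (Fin mγ) (Fin mΩ) ℝ))
        (Matrix.fromBlocks (Bμᵀ * Aμ⁻¹ * Bμ + GΩᵀ * AΩ⁻¹ * GΩ + Gμ * AΓ⁻¹ * Gμᵀ)
          (Gμ * AΓ⁻¹ * Gγᵀ) (Gμ * AΓ⁻¹ * Gγᵀ)ᵀ
          (Bγᵀ * Aγ⁻¹ * Bγ + Gγ * AΓ⁻¹ * Gγᵀ))).IsHermitian := by
    rw [Matrix.IsHermitian, conjTranspose_eq_transpose_of_trivial]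
    exact hsym
  have key : ∀ (p : Fin mΩ → ℝ) (q : Fin mμ → ℝ) (r : Fin mγ → ℝ),
      Sum.elim p (Sum.elim q r) ⬝ᵥ
        (Matrix.fromBlocks (BΩᵀ * AΩ⁻¹ * BΩ) (Matrix.fromCols (BΩᵀ * AΩ⁻¹ * GΩ) 0)
        (Matrix.fromRows (BΩᵀ * AΩ⁻¹ * GΩ)ᵀ (0 : Matrix (Fin mγ) (Fin mΩ) ℝ))
        (Matrix.fromBlocks (Bμᵀ * Aμ⁻¹ * Bμ + GΩᵀ * AΩ⁻¹ * GΩ + Gμ * AΓ⁻¹ * Gμᵀ)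
          (Gμ * AΓ⁻¹ * Gγᵀ) (Gμ * AΓ⁻¹ * Gγᵀ)ᵀ
          (Bγᵀ * Aγ⁻¹ * Bγ + Gγ * AΓ⁻¹ * Gγᵀ))) *ᵥ Sum.elim p (Sum.elim q r) =
      (BΩ *ᵥ p + GΩ *ᵥ q) ⬝ᵥ AΩ⁻¹ *ᵥ (BΩ *ᵥ p + GΩ *ᵥ q) +
      (Bμ *ᵥ q) ⬝ᵥ Aμ⁻¹ *ᵥ (Bμ *ᵥ q) +
      (Bγ *ᵥ r) ⬝ᵥ Aγ⁻¹ *ᵥ (Bγ *ᵥ r) +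
      (Gμᵀ *ᵥ q + Gγᵀ *ᵥ r) ⬝ᵥ AΓ⁻¹ *ᵥ (Gμᵀ *ᵥ q + Gγᵀ *ᵥ r) := by
    intro p q r
    have e1 := quad_aux AΩ⁻¹ BΩ BΩ p p
    have e2 := quad_aux AΩ⁻¹ BΩ GΩ p q
    have e3 : q ⬝ᵥ (BΩᵀ * AΩ⁻¹ * GΩ)ᵀ *ᵥ p = (GΩ *ᵥ q) ⬝ᵥ AΩ⁻¹ *ᵥ (BΩ *ᵥ p) := by
      rw [transpose_mul, transpose_mul, transpose_transpose, tΩ, ← Matrix.mul_assoc]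
      exact quad_aux AΩ⁻¹ GΩ BΩ q p
    have e4 := quad_aux Aμ⁻¹ Bμ Bμ q q
    have e5 := quad_aux AΩ⁻¹ GΩ GΩ q q
    have e6 : q ⬝ᵥ (Gμ * AΓ⁻¹ * Gμᵀ) *ᵥ q = (Gμᵀ *ᵥ q) ⬝ᵥ AΓ⁻¹ *ᵥ (Gμᵀ *ᵥ q) := by
      have h := quad_aux AΓ⁻¹ Gμᵀ Gμᵀ q q
      rwa [transpose_transpose] at h
    have e7 : q ⬝ᵥ (Gμ * AΓ⁻¹ * Gγᵀ) *ᵥ r = (Gμᵀ *ᵥ q) ⬝ᵥ AΓ⁻¹ *ᵥ (Gγᵀ *ᵥ r) := by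
      have h := quad_aux AΓ⁻¹ Gμᵀ Gγᵀ q r
      rwa [transpose_transpose] at h
    have e8 : r ⬝ᵥ (Gμ * AΓ⁻¹ * Gγᵀ)ᵀ *ᵥ q = (Gγᵀ *ᵥ r) ⬝ᵥ AΓ⁻¹ *ᵥ (Gμᵀ *ᵥ q) := by
      rw [transpose_mul, transpose_mul, tΓ, ← Matrix.mul_assoc]
      exact quad_aux AΓ⁻¹ Gγᵀ Gμᵀ r q
    have e9 := quad_aux Aγ⁻¹ Bγ Bγ r r
    have e10 : r ⬝ᵥ (Gγ * AΓ⁻¹ * Gγᵀ) *ᵥ r = (Gγᵀ *ᵥ r) ⬝ᵥ AΓ⁻¹ *ᵥ (Gγᵀ *ᵥ r) := by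
      have h := quad_aux AΓ⁻¹ Gγᵀ Gγᵀ r r
      rwa [transpose_transpose] at h
    simp only [Matrix.fromBlocks_mulVec, Sum.elim_comp_inl, Sum.elim_comp_inr,
      Matrix.fromCols_mulVec_sumElim, Matrix.fromRows_mulVec, Matrix.zero_mulVec,
      add_zero, sumElim_dotProduct_sumElim, Matrix.add_mulVec,
      dotProduct_add, Matrix.mulVec_add, add_dotProduct, dotProduct_zero, zero_dotProduct]
    rw [e1, e2, e3, e4, e5, e6, e7, e8, e9, e10]
    have s1 : (BΩ *ᵥ p) ⬝ᵥ AΩ⁻¹ *ᵥ (GΩ *ᵥ q) = (GΩ *ᵥ q) ⬝ᵥ AΩ⁻¹ *ᵥ (BΩ *ᵥ p) := by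
      rw [dotProduct_mulVec, ← mulVec_transpose, tΩ, dotProduct_comm]
    have s2 : (Gμᵀ *ᵥ q) ⬝ᵥ AΓ⁻¹ *ᵥ (Gγᵀ *ᵥ r) = (Gγᵀ *ᵥ r) ⬝ᵥ AΓ⁻¹ *ᵥ (Gμᵀ *ᵥ q) := by
      rw [dotProduct_mulVec, ← mulVec_transpose, tΓ, dotProduct_comm]
    rw [s1, s2]
    ring
  have dec : ∀ x : Fin mΩ ⊕ (Fin mμ ⊕ Fin mγ) → ℝ,
      x = Sum.elim (x ∘ Sum.inl) (Sum.elim (x ∘ Sum.inr ∘ Sum.inl) (x ∘ Sum.inr ∘ Sum.inr)) := by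
    intro x
    funext i
    rcases i with i | i | i <;> rfl
  refine ⟨hsym, .of_dotProduct_mulVec_nonneg hherm fun x => ?_,
    fun hker => .of_dotProduct_mulVec_pos hherm fun x hx => ?_⟩
  · rw [star_trivial, dec x, key]
    have n1 := pd_nonneg hAΩ.inv (BΩ *ᵥ (x ∘ Sum.inl) + GΩ *ᵥ (x ∘ Sum.inr ∘ Sum.inl))
    have n2 := pd_nonneg hAμ.inv (Bμ *ᵥ (x ∘ Sum.inr ∘ Sum.inl))
    have n3 := pd_nonneg hAγ.inv (Bγ *ᵥ (x ∘ Sum.inr ∘ Sum.inr))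
    have n4 := pd_nonneg hAΓ.inv (Gμᵀ *ᵥ (x ∘ Sum.inr ∘ Sum.inl) + Gγᵀ *ᵥ (x ∘ Sum.inr ∘ Sum.inr))
    linarith
  · rw [star_trivial, dec x, key]
    have n1 := pd_nonneg hAΩ.inv (BΩ *ᵥ (x ∘ Sum.inl) + GΩ *ᵥ (x ∘ Sum.inr ∘ Sum.inl))
    have n2 := pd_nonneg hAμ.inv (Bμ *ᵥ (x ∘ Sum.inr ∘ Sum.inl))
    have n3 := pd_nonneg hAγ.inv (Bγ *ᵥ (x ∘ Sum.inr ∘ Sum.inr))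
    have n4 := pd_nonneg hAΓ.inv (Gμᵀ *ᵥ (x ∘ Sum.inr ∘ Sum.inl) + Gγᵀ *ᵥ (x ∘ Sum.inr ∘ Sum.inr))
    set p := x ∘ Sum.inl
    set q := x ∘ Sum.inr ∘ Sum.inl
    set r := x ∘ Sum.inr ∘ Sum.inr
    by_contra hc
    push_neg at hc
    have z1 : (BΩ *ᵥ p + GΩ *ᵥ q) ⬝ᵥ AΩ⁻¹ *ᵥ (BΩ *ᵥ p + GΩ *ᵥ q) = 0 := by linarith
    have z2 : (Bμ *ᵥ q) ⬝ᵥ Aμ⁻¹ *ᵥ (Bμ *ᵥ q) = 0 := by linarith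
    have z3 : (Bγ *ᵥ r) ⬝ᵥ Aγ⁻¹ *ᵥ (Bγ *ᵥ r) = 0 := by linarith
    have z4 : (Gμᵀ *ᵥ q + Gγᵀ *ᵥ r) ⬝ᵥ AΓ⁻¹ *ᵥ (Gμᵀ *ᵥ q + Gγᵀ *ᵥ r) = 0 := by linarith
    obtain ⟨hpz, hqz, hrz⟩ := hker p q r (pd_eq_zero hAΩ.inv z1) (pd_eq_zero hAμ.inv z2)
      (pd_eq_zero hAγ.inv z3) (pd_eq_zero hAΓ.inv z4)
    apply hx
    funext i
    rcases i with i | i | i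
    · exact congrFun hpz i
    · exact congrFun hqz i
    · exact congrFun hrz i

/-- The 3×3 block coefficient matrix `S = [[S_Ω, C_Ω, 0], [C_Ωᵀ, S_μ, C_μ],
[0, C_μᵀ, S_γ]]` of the pressure matrix formulation of the discretized
mixed-dimensional Darcy problem is symmetric positive semidefinite, and
positive definite under the joint kernel condition on `B_Ω, G_Ω, B_μ, B_γ,
G_μᵀ, G_γᵀ`. -/
theorem darcy_pressure_matrix_posSemidef_and_posDef {nΩ mΩ nμ mμ nγ mγ nΓ : ℕ}
    (AΩ : Matrix (Fin nΩ) (Fin nΩ) ℝ)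
    (Aμ : Matrix (Fin nμ) (Fin nμ) ℝ)
    (Aγ : Matrix (Fin nγ) (Fin nγ) ℝ)
    (AΓ : Matrix (Fin nΓ) (Fin nΓ) ℝ)
    (BΩ : Matrix (Fin nΩ) (Fin mΩ) ℝ)
    (Bμ : Matrix (Fin nμ) (Fin mμ) ℝ)
    (Bγ : Matrix (Fin nγ) (Fin mγ) ℝ)
    (GΩ : Matrix (Fin nΩ) (Fin mμ) ℝ)
    (Gμ : Matrix (Fin mμ) (Fin nΓ) ℝ)
    (Gγ : Matrix (Fin mγ) (Fin nΓ) ℝ)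
    (hAΩ : AΩ.PosDef) (hAμ : Aμ.PosDef) (hAγ : Aγ.PosDef) (hAΓ : AΓ.PosDef) :
    -- the pressure-system block matrix
    let SΩ := BΩᵀ * AΩ⁻¹ * BΩ
    let Sμ := Bμᵀ * Aμ⁻¹ * Bμ + GΩᵀ * AΩ⁻¹ * GΩ + Gμ * AΓ⁻¹ * Gμᵀ
    let Sγ := Bγᵀ * Aγ⁻¹ * Bγ + Gγ * AΓ⁻¹ * Gγᵀ
    let CΩ := BΩᵀ * AΩ⁻¹ * GΩ
    let Cμ := Gμ * AΓ⁻¹ * Gγᵀ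
    let S : Matrix (Fin mΩ ⊕ (Fin mμ ⊕ Fin mγ)) (Fin mΩ ⊕ (Fin mμ ⊕ Fin mγ)) ℝ :=
      Matrix.fromBlocks SΩ (Matrix.fromCols CΩ 0)
        (Matrix.fromRows CΩᵀ (0 : Matrix (Fin mγ) (Fin mΩ) ℝ))
        (Matrix.fromBlocks Sμ Cμ Cμᵀ Sγ)
    S.IsSymm ∧ S.PosSemidef ∧
    ((∀ (pΩ : Fin mΩ → ℝ) (pμ : Fin mμ → ℝ) (pγ : Fin mγ → ℝ),
        BΩ.mulVec pΩ + GΩ.mulVec pμ = 0 → Bμ.mulVec pμ = 0 →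
        Bγ.mulVec pγ = 0 → Gμᵀ.mulVec pμ + Gγᵀ.mulVec pγ = 0 →
        pΩ = 0 ∧ pμ = 0 ∧ pγ = 0) →
      S.PosDef) := by
  intro SΩ Sμ Sγ CΩ Cμ S
  exact darcy_main AΩ Aμ Aγ AΓ BΩ Bμ Bγ GΩ Gμ Gγ hAΩ hAμ hAγ hAΓ
end
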